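/- Let h : P → Q be an integral homomorphism of fine, saturated, sharp monoids, and assume h is local (hence injective). Then for every q ∈ Q^gp, the set P_{≤q} = { x ∈ P^gp : h^gp(x) ≤ q } (where a ≤ b in Q^gp means b − a ∈ Q) is either empty or has a maximum element. -/

import Mathlib

/-- Let `h : P → Q` be an integral, local homomorphism of fine,
saturated, sharp monoids (modeled as submonoids of their Grothendieck groups
`G = P^gp`, `H = Q^gp`).  Then for every `q ∈ Q^gp`, the set
`P_{≤q} = {x ∈ P^gp : h^gp x ≤ q}` (where `a ≤ b` in `Q^gp` means `b - a ∈ Q`)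
is either empty or has a maximum element (for the order `a ≤ b ↔ b - a ∈ P`). -/
theorem stmt_9 {G H : Type*} [AddCommGroup G] [AddCommGroup H]
    (P : AddSubmonoid G) (Q : AddSubmonoid H) (h : G →+ H)
    (hPQ : ∀ x ∈ P, h x ∈ Q)
    (hPfg : P.FG) (hQfg : Q.FG)
    (hGgen : ∀ x : G, ∃ a ∈ P, ∃ b ∈ P, x = a - b)
    (hHgen : ∀ y : H, ∃ a ∈ Q, ∃ b ∈ Q, y = a - b)
    (hPsharp : ∀ u ∈ P, -u ∈ P → u = 0) (hQsharp : ∀ u ∈ Q, -u ∈ Q → u = 0)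
    (hPsat : ∀ (n : ℕ) (x : G), 1 ≤ n → n • x ∈ P → x ∈ P)
    (hQsat : ∀ (n : ℕ) (y : H), 1 ≤ n → n • y ∈ Q → y ∈ Q)
    (hloc : ∀ x ∈ P, h x = 0 → x = 0)
    (hint : ∀ x₁ ∈ P, ∀ x₂ ∈ P, ∀ y₁ ∈ Q, ∀ y₂ ∈ Q, h x₁ + y₁ = h x₂ + y₂ →
      ∃ x₃ ∈ P, ∃ x₄ ∈ P, ∃ y ∈ Q,
        y₁ = h x₃ + y ∧ y₂ = h x₄ + y ∧ x₁ + x₃ = x₂ + x₄) :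
    ∀ q : H, (∃ x : G, q - h x ∈ Q) →
      ∃ m : G, q - h m ∈ Q ∧ ∀ x : G, q - h x ∈ Q → m - x ∈ P := by
  classical
  intro q hq
  obtain ⟨x₀, hx₀⟩ := hq
  -- Step 1: directedness of the set `{x : q - h x ∈ Q}`, from integrality.
  have hdir : ∀ x₁ x₂ : G, q - h x₁ ∈ Q → q - h x₂ ∈ Q →
      ∃ z : G, q - h z ∈ Q ∧ z - x₁ ∈ P ∧ z - x₂ ∈ P := by
    intro x₁ x₂ h₁ h₂
    obtain ⟨a₁, ha₁, b₁, hb₁, hx₁⟩ := hGgen x₁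
    obtain ⟨a₂, ha₂, b₂, hb₂, hx₂⟩ := hGgen x₂
    have key : h (a₁ + b₂) + (q - h x₁) = h (a₂ + b₁) + (q - h x₂) := by
      rw [hx₁, hx₂]
      simp only [map_add, map_sub]
      abel
    obtain ⟨x₃, hx₃, x₄, hx₄, y, hyQ, hy₁, hy₂, hsum⟩ :=
      hint _ (P.add_mem ha₁ hb₂) _ (P.add_mem ha₂ hb₁) _ h₁ _ h₂ key
    have hz : q - h (x₁ + x₃) = y := by
      rw [map_add, sub_add_eq_sub_sub, hy₁]
      abel
    have hx : x₁ + x₃ = x₂ + x₄ := by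
      have h' : (a₁ + b₂ + x₃) - (b₁ + b₂) = (a₂ + b₁ + x₄) - (b₁ + b₂) := by rw [hsum]
      rw [hx₁, hx₂]
      calc a₁ - b₁ + x₃ = (a₁ + b₂ + x₃) - (b₁ + b₂) := by abel
        _ = (a₂ + b₁ + x₄) - (b₁ + b₂) := h'
        _ = a₂ - b₂ + x₄ := by abel
    refine ⟨x₁ + x₃, hz ▸ hyQ, ?_, ?_⟩
    · have : x₁ + x₃ - x₁ = x₃ := by abel
      rw [this]; exact hx₃
    · have : x₁ + x₃ - x₂ = x₄ := by rw [hx]; abel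
      rw [this]; exact hx₄
  -- Step 2: Noetherianity of the monoid algebra `ℚ[Q]`.
  haveI : AddMonoid.FG ↥Q := (AddMonoid.fg_iff_addSubmonoid_fg Q).mpr hQfg
  haveI : IsNoetherianRing (AddMonoidAlgebra ℚ ↥Q) :=
    Algebra.FiniteType.isNoetherianRing ℚ _
  set A := AddMonoidAlgebra ℚ ↥Q with hA
  -- the family of monomial ideals indexed by the solutions
  set T : Set (Ideal A) :=
    {I | ∃ x : G, ∃ hx : q - h x ∈ Q,
      I = Ideal.span {AddMonoidAlgebra.single (⟨q - h x, hx⟩ : ↥Q) (1 : ℚ)}} with hT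
  have hTne : T.Nonempty := ⟨_, x₀, hx₀, rfl⟩
  obtain ⟨I, hIT, hImax⟩ := (set_has_maximal_iff_noetherian.mpr inferInstance) T hTne
  obtain ⟨m, hm, rfl⟩ := hIT
  refine ⟨m, hm, ?_⟩
  intro x hx
  obtain ⟨z, hzQ, hzm, hzx⟩ := hdir m x hm hx
  -- z = m, using maximality of the ideal
  have huQ : h (z - m) ∈ Q := hPQ _ hzm
  have hdecomp : (⟨q - h m, hm⟩ : ↥Q) = ⟨q - h z, hzQ⟩ + ⟨h (z - m), huQ⟩ := by
    ext
    simp only [AddSubmonoid.coe_add, map_sub]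
    abel
  have hmem : AddMonoidAlgebra.single (⟨q - h m, hm⟩ : ↥Q) (1 : ℚ) ∈
      Ideal.span {AddMonoidAlgebra.single (⟨q - h z, hzQ⟩ : ↥Q) (1 : ℚ)} := by
    refine Ideal.mem_span_singleton'.mpr
      ⟨AddMonoidAlgebra.single (⟨h (z - m), huQ⟩ : ↥Q) (1 : ℚ), ?_⟩
    rw [AddMonoidAlgebra.single_mul_single, hdecomp, one_mul, add_comm]
  have hle : Ideal.span {AddMonoidAlgebra.single (⟨q - h m, hm⟩ : ↥Q) (1 : ℚ)} ≤
      Ideal.span {AddMonoidAlgebra.single (⟨q - h z, hzQ⟩ : ↥Q) (1 : ℚ)} := by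
    rw [Ideal.span_le, Set.singleton_subset_iff]
    exact hmem
  have heq : Ideal.span {AddMonoidAlgebra.single (⟨q - h m, hm⟩ : ↥Q) (1 : ℚ)} =
      Ideal.span {AddMonoidAlgebra.single (⟨q - h z, hzQ⟩ : ↥Q) (1 : ℚ)} := by
    by_contra hne
    exact hImax _ ⟨z, hzQ, rfl⟩ (lt_of_le_of_ne hle hne)
  -- extract divisibility from membership of the monomial
  have hmem' : AddMonoidAlgebra.single (⟨q - h z, hzQ⟩ : ↥Q) (1 : ℚ) ∈
      Ideal.span {AddMonoidAlgebra.single (⟨q - h m, hm⟩ : ↥Q) (1 : ℚ)} := by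
    rw [heq]; exact Ideal.mem_span_singleton_self _
  obtain ⟨a, ha⟩ := Ideal.mem_span_singleton'.mp hmem'
  have hsupp : (⟨q - h z, hzQ⟩ : ↥Q) ∈
      (a * AddMonoidAlgebra.single (⟨q - h m, hm⟩ : ↥Q) (1 : ℚ)).coeff.support := by
    rw [ha, AddMonoidAlgebra.coeff_single, Finsupp.support_single_ne_zero _ (one_ne_zero)]
    exact Finset.mem_singleton_self _
  have hsub := AddMonoidAlgebra.support_coeff_mul_subset a
    (AddMonoidAlgebra.single (⟨q - h m, hm⟩ : ↥Q) (1 : ℚ)) hsupp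
  rw [AddMonoidAlgebra.coeff_single, Finsupp.support_single_ne_zero _ (one_ne_zero)] at hsub
  rw [Finset.mem_add] at hsub
  obtain ⟨c, hc, d, hd, hcd⟩ := hsub
  rw [Finset.mem_singleton] at hd
  subst hd
  -- so q - h z = c + (q - h m) in Q, i.e. -h(z-m) = c ∈ Q
  have hcH : (c : H) = -(h (z - m)) := by
    have h1 : q - h z = (c : H) + (q - h m) := by
      have : ((⟨q - h z, hzQ⟩ : ↥Q) : H) = (c : H) + (q - h m) := by rw [← hcd]; rfl
      exact this
    have h2 : (c : H) = (q - h z) - (q - h m) := by rw [h1]; abel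
    rw [map_sub, h2]; abel
  have hzm0 : h (z - m) = 0 := by
    apply hQsharp _ huQ
    rw [← hcH]; exact c.2
  have hzmeq : z - m = 0 := hloc _ hzm hzm0
  have hzm' : z = m := by
    have := sub_eq_zero.mp hzmeq; exact this
  rw [← hzm']
  exact hzx
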